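/- For any tree T on n vertices, γ_o(T) ≤ γ_a(T) + n/6, where γ_a(T) and γ_o(T) are the global defensive and global offensive alliance numbers of T respectively. -/

import Mathlib

open SimpleGraph Finset
open scoped Classical

/-- The closed neighborhood `N[v]` of a vertex `v`. -/
noncomputable def closedNbhd {V : Type*} [Fintype V] (G : SimpleGraph V) (v : V) : Finset V :=
  insert v (Finset.univ.filter (fun u => G.Adj v u))

/-- `S` is a dominating set: every vertex outside `S` has a neighbor in `S`. -/
def Dominating {V : Type*} [Fintype V] (G : SimpleGraph V) (S : Finset V) : Prop :=
  ∀ v, v ∉ S → ∃ u ∈ S, G.Adj v u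

/-- `S` is a global defensive alliance. -/
def GlobalDefensiveAlliance {V : Type*} [Fintype V] (G : SimpleGraph V) (S : Finset V) : Prop :=
  Dominating G S ∧ ∀ v ∈ S, (closedNbhd G v \ S).card ≤ (closedNbhd G v ∩ S).card

/-- `S` is a global offensive alliance. -/
def GlobalOffensiveAlliance {V : Type*} [Fintype V] (G : SimpleGraph V) (S : Finset V) : Prop :=
  Dominating G S ∧ ∀ v, v ∉ S → (∃ u ∈ S, G.Adj v u) →
    (closedNbhd G v \ S).card ≤ (closedNbhd G v ∩ S).card

/-- Edges with both endpoints in `S`. -/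
noncomputable def edgesInside {V : Type*} [Fintype V] (G : SimpleGraph V) (S : Finset V) :
    Finset (Sym2 V) :=
  G.edgeFinset.filter (fun e => ∀ x ∈ e, x ∈ S)

/-- Edges with both endpoints outside `S`. -/
noncomputable def edgesOutside {V : Type*} [Fintype V] (G : SimpleGraph V) (S : Finset V) :
    Finset (Sym2 V) :=
  G.edgeFinset.filter (fun e => ∀ x ∈ e, x ∉ S)

/-- Edges with exactly one endpoint in `S`. -/
noncomputable def edgesBetween {V : Type*} [Fintype V] (G : SimpleGraph V) (S : Finset V) :
    Finset (Sym2 V) :=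
  G.edgeFinset.filter (fun e => (∃ x ∈ e, x ∈ S) ∧ (∃ x ∈ e, x ∉ S))

/-- The global defensive alliance number `γ_a(G)`. -/
noncomputable def gammaA {V : Type*} [Fintype V] (G : SimpleGraph V) : ℕ :=
  sInf {k | ∃ S : Finset V, GlobalDefensiveAlliance G S ∧ S.card = k}

/-- The global offensive alliance number `γ_o(G)`. -/
noncomputable def gammaO {V : Type*} [Fintype V] (G : SimpleGraph V) : ℕ :=
  sInf {k | ∃ S : Finset V, GlobalOffensiveAlliance G S ∧ S.card = k}

section Auxiliary

variable {V : Type*} [Fintype V] {G : SimpleGraph V}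

set_option linter.unusedSectionVars false

/-- In a tree, the lengths of the unique paths from a root to two adjacent
vertices differ by exactly one. -/
lemma tree_path_length_adj (hT : G.IsTree) (r : V) {u v : V} (huv : G.Adj u v) :
    ((hT.existsUnique_path r v).choose.length = (hT.existsUnique_path r u).choose.length + 1) ∨
    ((hT.existsUnique_path r u).choose.length = (hT.existsUnique_path r v).choose.length + 1) := by
  set p := (hT.existsUnique_path r u).choose with hp_def
  have hp : p.IsPath := (hT.existsUnique_path r u).choose_spec.1
  by_cases hv : v ∈ p.support
  · right
    have htake : (p.takeUntil v hv).IsPath := hp.takeUntil hv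
    have hq : (hT.existsUnique_path r v).choose = p.takeUntil v hv :=
      ((hT.existsUnique_path r v).choose_spec.2 _ htake).symm
    have hdrop : (p.dropUntil v hv).IsPath := hp.dropUntil hv
    -- the unique path from v to u is the single edge
    have hsingle : (SimpleGraph.Walk.cons huv.symm SimpleGraph.Walk.nil : G.Walk v u).IsPath := by
      rw [SimpleGraph.Walk.cons_isPath_iff]
      refine ⟨SimpleGraph.Walk.IsPath.nil, ?_⟩
      simp [(G.ne_of_adj huv).symm]
    have hEU := hT.existsUnique_path v u
    have h1 : p.dropUntil v hv = SimpleGraph.Walk.cons huv.symm SimpleGraph.Walk.nil :=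
      hEU.unique hdrop hsingle
    have hlen : (p.takeUntil v hv).length + (p.dropUntil v hv).length = p.length := by
      rw [← SimpleGraph.Walk.length_append, SimpleGraph.Walk.take_spec]
    rw [h1] at hlen
    simp only [SimpleGraph.Walk.length_cons, SimpleGraph.Walk.length_nil] at hlen
    rw [hq]
    omega
  · left
    have hconcat : (p.concat huv).IsPath := by
      rw [← SimpleGraph.Walk.isPath_reverse_iff, SimpleGraph.Walk.reverse_concat]
      rw [SimpleGraph.Walk.cons_isPath_iff]
      exact ⟨(SimpleGraph.Walk.isPath_reverse_iff p).2 hp, by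
        rwa [SimpleGraph.Walk.support_reverse, List.mem_reverse]⟩
    have hq : (hT.existsUnique_path r v).choose = p.concat huv :=
      ((hT.existsUnique_path r v).choose_spec.2 _ hconcat).symm
    rw [hq, SimpleGraph.Walk.length_concat]

/-- Every tree admits a 2-coloring. -/
lemma tree_exists_coloring (hT : G.IsTree) :
    ∃ X : Finset V, ∀ u v, G.Adj u v → (u ∈ X ↔ v ∉ X) := by
  have hne : Nonempty V := hT.isConnected.nonempty
  obtain ⟨r⟩ := hne
  refine ⟨univ.filter (fun v => Even (hT.existsUnique_path r v).choose.length), ?_⟩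
  intro u v huv
  simp only [mem_filter, mem_univ, true_and]
  rcases tree_path_length_adj hT r huv with h | h <;> rw [h] <;>
    simp [Nat.even_add_one, not_not]

/-- Double counting of adjacent pairs. -/
lemma sum_adj_comm (G : SimpleGraph V) (P Q : Finset V) :
    ∑ u ∈ P, (Q.filter (fun v => G.Adj u v)).card
      = ∑ v ∈ Q, (P.filter (fun u => G.Adj v u)).card := by
  simp only [Finset.card_filter]
  rw [Finset.sum_comm]
  refine Finset.sum_congr rfl fun v _ => Finset.sum_congr rfl fun u _ => ?_
  by_cases h : G.Adj u v
  · rw [if_pos h, if_pos h.symm]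
  · rw [if_neg h, if_neg (fun h' => h h'.symm)]

lemma din_add_dout (G : SimpleGraph V) (S : Finset V) (v : V) :
    (S.filter (fun u => G.Adj v u)).card + (Sᶜ.filter (fun u => G.Adj v u)).card
      = G.degree v := by
  have h1 : (Finset.univ.filter (fun u => G.Adj v u)).filter (fun u => u ∈ S)
      = S.filter (fun u => G.Adj v u) := by
    ext u; simp [and_comm]
  have h2 : (Finset.univ.filter (fun u => G.Adj v u)).filter (fun u => ¬ u ∈ S)
      = Sᶜ.filter (fun u => G.Adj v u) := by
    ext u; simp [and_comm]
  rw [← SimpleGraph.card_neighborFinset_eq_degree, SimpleGraph.neighborFinset_eq_filter,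
    ← h1, ← h2, Finset.card_filter_add_card_filter_not]

lemma closedNbhd_sdiff (G : SimpleGraph V) {S : Finset V} {v : V} (hv : v ∈ S) :
    closedNbhd G v \ S = Sᶜ.filter (fun u => G.Adj v u) := by
  ext u
  simp only [closedNbhd, Finset.mem_sdiff, Finset.mem_insert, Finset.mem_filter,
    Finset.mem_univ, true_and, Finset.mem_compl]
  constructor
  · rintro ⟨h1 | h1, h2⟩
    · exact absurd (h1 ▸ hv) h2
    · exact ⟨h2, h1⟩
  · rintro ⟨h2, h1⟩; exact ⟨Or.inr h1, h2⟩

lemma closedNbhd_inter (G : SimpleGraph V) {S : Finset V} {v : V} (hv : v ∈ S) :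
    (closedNbhd G v ∩ S).card = (S.filter (fun u => G.Adj v u)).card + 1 := by
  have h : closedNbhd G v ∩ S = insert v (S.filter (fun u => G.Adj v u)) := by
    ext u
    simp only [closedNbhd, Finset.mem_inter, Finset.mem_insert, Finset.mem_filter,
      Finset.mem_univ, true_and]
    constructor
    · rintro ⟨h1 | h1, h2⟩
      · exact Or.inl h1
      · exact Or.inr ⟨h2, h1⟩
    · rintro (h1 | ⟨h2, h1⟩)
      · exact ⟨Or.inl h1, h1 ▸ hv⟩
      · exact ⟨Or.inr h1, h2⟩
  rw [h, Finset.card_insert_of_notMem]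
  simp [G.irrefl]

/-- The key counting inequality for a global defensive alliance. -/
lemma key_count {S : Finset V} (hS : GlobalDefensiveAlliance G S) :
    3 * Sᶜ.card + ∑ v ∈ Sᶜ, (Sᶜ.filter (fun u => G.Adj v u)).card
      ≤ 2 * G.edgeFinset.card + S.card := by
  classical
  set din : V → ℕ := fun v => (S.filter (fun u => G.Adj v u)).card with hdin
  set dout : V → ℕ := fun v => (Sᶜ.filter (fun u => G.Adj v u)).card with hdout
  have htot : (∑ v ∈ S, din v + ∑ v ∈ S, dout v)
      + (∑ v ∈ Sᶜ, din v + ∑ v ∈ Sᶜ, dout v) = 2 * G.edgeFinset.card := by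
    rw [← SimpleGraph.sum_degrees_eq_twice_card_edges, ← Finset.sum_add_distrib,
      ← Finset.sum_add_distrib, ← Finset.sum_add_sum_compl S]
    refine congrArg₂ _ ?_ ?_ <;> exact Finset.sum_congr rfl fun v _ => din_add_dout G S v
  have hBo_Bi : ∑ v ∈ S, dout v = ∑ v ∈ Sᶜ, din v := sum_adj_comm G S Sᶜ
  have hdom : Sᶜ.card ≤ ∑ v ∈ Sᶜ, din v := by
    rw [Finset.card_eq_sum_ones]
    refine Finset.sum_le_sum fun v hv => ?_
    obtain ⟨u, hu, hadj⟩ := hS.1 v (Finset.mem_compl.1 hv)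
    exact Finset.card_pos.2 ⟨u, Finset.mem_filter.2 ⟨hu, hadj⟩⟩
  have hdef : ∑ v ∈ S, dout v ≤ ∑ v ∈ S, din v + S.card := by
    rw [Finset.card_eq_sum_ones S, ← Finset.sum_add_distrib]
    refine Finset.sum_le_sum fun v hv => ?_
    have h := hS.2 v hv
    rw [closedNbhd_sdiff G hv, closedNbhd_inter G hv] at h
    exact h
  have hfold : Sᶜ.sum dout = ∑ v ∈ Sᶜ, dout v := rfl
  omega

/-- If every neighbour of `v ∉ S` lies in `S` and `v` has a neighbour, the offensive
condition holds at `v`. -/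
lemma offensive_at (S : Finset V) {v : V} (hv : v ∉ S)
    (hnb : ∀ u, G.Adj v u → u ∈ S) (hex : ∃ u ∈ S, G.Adj v u) :
    (closedNbhd G v \ S).card ≤ (closedNbhd G v ∩ S).card := by
  have hdiff : closedNbhd G v \ S = {v} := by
    ext u
    simp only [closedNbhd, Finset.mem_sdiff, Finset.mem_insert, Finset.mem_filter,
      Finset.mem_univ, true_and, Finset.mem_singleton]
    constructor
    · rintro ⟨h1 | h1, h2⟩
      · exact h1
      · exact absurd (hnb u h1) h2
    · rintro rfl; exact ⟨Or.inl rfl, hv⟩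
  obtain ⟨u, hu, hadj⟩ := hex
  have hpos : 0 < (closedNbhd G v ∩ S).card := by
    refine Finset.card_pos.2 ⟨u, Finset.mem_inter.2 ⟨?_, hu⟩⟩
    simp only [closedNbhd, Finset.mem_insert, Finset.mem_filter, Finset.mem_univ, true_and]
    exact Or.inr hadj
  rw [hdiff, Finset.card_singleton]
  omega

/-- One color class of a 2-coloring of a tree with at least two vertices is a
global offensive alliance. -/
lemma offensive_of_color (hT : G.IsTree) (hn : 2 ≤ Fintype.card V) {X : Finset V}
    (hX : ∀ u v, G.Adj u v → (u ∈ X ↔ v ∉ X)) : GlobalOffensiveAlliance G X := by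
  have hadjX : ∀ v, v ∉ X → ∀ u, G.Adj v u → u ∈ X := by
    intro v hv u hadj
    by_contra hu
    exact hv ((hX v u hadj).2 hu)
  have hdom : Dominating G X := by
    intro v hv
    obtain ⟨w, hw⟩ := Fintype.exists_ne_of_one_lt_card (by omega : 1 < Fintype.card V) v
    obtain ⟨p⟩ := hT.isConnected.preconnected v w
    cases p with
    | nil => exact absurd rfl hw
    | cons h q => exact ⟨_, hadjX v hv _ h, h⟩
  exact ⟨hdom, fun v hv hex => offensive_at X hv (hadjX v hv) hex⟩

/-- Adding one color class of the "outside boundary" to a dominating set gives a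
global offensive alliance. -/
lemma offensive_of_dom_union {S : Finset V} (hS : Dominating G S) {X : Finset V}
    (hX : ∀ u v, G.Adj u v → (u ∈ X ↔ v ∉ X)) :
    GlobalOffensiveAlliance G
      (S ∪ ((Finset.univ.filter (fun v => v ∉ S ∧ ∃ u, u ∉ S ∧ G.Adj v u)) ∩ X)) := by
  set W := Finset.univ.filter (fun v => v ∉ S ∧ ∃ u, u ∉ S ∧ G.Adj v u) with hW
  have hdom : Dominating G (S ∪ (W ∩ X)) := by
    intro v hv
    have hvS : v ∉ S := fun h => hv (Finset.mem_union_left _ h)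
    obtain ⟨u, hu, hadj⟩ := hS v hvS
    exact ⟨u, Finset.mem_union_left _ hu, hadj⟩
  refine ⟨hdom, fun v hv _ => offensive_at _ hv ?_ ?_⟩
  · intro u hadj
    by_contra hu
    have hvS : v ∉ S := fun h => hv (Finset.mem_union_left _ h)
    have huS : u ∉ S := fun h => hu (Finset.mem_union_left _ h)
    have hvW : v ∈ W := by
      rw [hW]; exact Finset.mem_filter.2 ⟨Finset.mem_univ v, hvS, u, huS, hadj⟩
    have huW : u ∈ W := by
      rw [hW]
      exact Finset.mem_filter.2 ⟨Finset.mem_univ u, huS, v, hvS, hadj.symm⟩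
    have hvX : v ∉ X := fun h =>
      hv (Finset.mem_union_right _ (Finset.mem_inter.2 ⟨hvW, h⟩))
    have huX : u ∈ X := by
      by_contra huX
      exact hvX ((hX v u hadj).2 huX)
    exact hu (Finset.mem_union_right _ (Finset.mem_inter.2 ⟨huW, huX⟩))
  · have hvS : v ∉ S := fun h => hv (Finset.mem_union_left _ h)
    obtain ⟨u, hu, hadj⟩ := hS v hvS
    exact ⟨u, Finset.mem_union_left _ hu, hadj⟩

end Auxiliary

/-- For any tree on n vertices, γ_o(T) ≤ γ_a(T) + n/6. -/
theorem stmt_8 {V : Type*} [Fintype V] (G : SimpleGraph V) (hT : G.IsTree) :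
    (gammaO G : ℝ) ≤ (gammaA G : ℝ) + (Fintype.card V : ℝ) / 6 := by
  classical
  have hne : Nonempty V := hT.isConnected.nonempty
  have hn1 : 1 ≤ Fintype.card V := Fintype.card_pos
  -- a minimum global defensive alliance exists
  have hAne : {k | ∃ S : Finset V, GlobalDefensiveAlliance G S ∧ S.card = k}.Nonempty := by
    refine ⟨(Finset.univ : Finset V).card, Finset.univ, ⟨?_, ?_⟩, rfl⟩
    · intro v hv; exact absurd (Finset.mem_univ v) hv
    · intro v _
      have : closedNbhd G v \ Finset.univ = ∅ := by
        ext u; simp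
      simp [this]
  obtain ⟨S₀, hS₀, hScard⟩ := Nat.sInf_mem hAne
  have hScard' : S₀.card = gammaA G := hScard
  have hgo_le : ∀ S' : Finset V, GlobalOffensiveAlliance G S' → gammaO G ≤ S'.card :=
    fun S' h => Nat.sInf_le ⟨S', h, rfl⟩
  have hgA1 : 1 ≤ gammaA G := by
    by_contra h
    have h0 : gammaA G = 0 := by omega
    have hS0 : S₀ = ∅ := Finset.card_eq_zero.1 (hScard'.trans h0)
    obtain ⟨v⟩ := hne
    obtain ⟨u, hu, _⟩ := hS₀.1 v (by simp [hS0])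
    simp [hS0] at hu
  by_cases hn2 : 2 ≤ Fintype.card V
  · obtain ⟨X, hX⟩ := tree_exists_coloring hT
    have hXc : ∀ u v, G.Adj u v → (u ∈ Xᶜ ↔ v ∉ Xᶜ) := by
      intro u v h
      simp only [Finset.mem_compl, not_not]
      exact (hX v u h.symm).symm
    by_cases hcase : (Fintype.card V : ℝ) ≤ 3 * (gammaA G : ℝ)
    · -- large γ_a: use the smaller color class
      set X₁ := if X.card ≤ Xᶜ.card then X else Xᶜ with hX₁def
      have hX₁ : ∀ u v, G.Adj u v → (u ∈ X₁ ↔ v ∉ X₁) := by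
        rw [hX₁def]; split_ifs
        · exact hX
        · exact hXc
      have hXcompl : X.card + Xᶜ.card = Fintype.card V := Finset.card_add_card_compl X
      have hX₁card : 2 * X₁.card ≤ Fintype.card V := by
        rw [hX₁def]; split_ifs with h' <;> omega
      have h1 : gammaO G ≤ X₁.card := hgo_le _ (offensive_of_color hT hn2 hX₁)
      have c1 : (gammaO G : ℝ) ≤ (X₁.card : ℝ) := by exact_mod_cast h1
      have c2 : 2 * (X₁.card : ℝ) ≤ (Fintype.card V : ℝ) := by exact_mod_cast hX₁card
      linarith
    · -- small γ_a: augment the minimum defensive alliance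
      set W := Finset.univ.filter (fun v => v ∉ S₀ ∧ ∃ u, u ∉ S₀ ∧ G.Adj v u) with hWdef
      set Y := if (W ∩ X).card ≤ (W ∩ Xᶜ).card then X else Xᶜ with hYdef
      have hY : ∀ u v, G.Adj u v → (u ∈ Y ↔ v ∉ Y) := by
        rw [hYdef]; split_ifs
        · exact hX
        · exact hXc
      have hsplit : (W ∩ X).card + (W ∩ Xᶜ).card = W.card := by
        have e1 : W.filter (fun v => v ∈ X) = W ∩ X := by ext v; simp
        have e2 : W.filter (fun v => ¬ v ∈ X) = W ∩ Xᶜ := by ext v; simp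
        rw [← e1, ← e2, Finset.card_filter_add_card_filter_not]
      have hY2 : 2 * (W ∩ Y).card ≤ W.card := by
        rw [hYdef]; split_ifs with h' <;> omega
      have hoff : GlobalOffensiveAlliance G (S₀ ∪ (W ∩ Y)) := by
        rw [hWdef]
        exact offensive_of_dom_union hS₀.1 hY
      have h1 : gammaO G ≤ S₀.card + (W ∩ Y).card :=
        le_trans (hgo_le _ hoff) (Finset.card_union_le _ _)
      have hWD : W.card ≤ ∑ v ∈ S₀ᶜ, (S₀ᶜ.filter (fun u => G.Adj v u)).card := by
        have hWsub : W ⊆ S₀ᶜ := by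
          intro v hv
          rw [hWdef] at hv
          exact Finset.mem_compl.2 (Finset.mem_filter.1 hv).2.1
        calc W.card = ∑ v ∈ W, 1 := Finset.card_eq_sum_ones W
          _ ≤ ∑ v ∈ W, (S₀ᶜ.filter (fun u => G.Adj v u)).card := by
              refine Finset.sum_le_sum fun v hv => ?_
              rw [hWdef] at hv
              obtain ⟨-, -, u, huS, hadj⟩ := Finset.mem_filter.1 hv
              exact Finset.card_pos.2
                ⟨u, Finset.mem_filter.2 ⟨Finset.mem_compl.2 huS, hadj⟩⟩
          _ ≤ ∑ v ∈ S₀ᶜ, (S₀ᶜ.filter (fun u => G.Adj v u)).card :=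
              Finset.sum_le_sum_of_subset hWsub
      have hkey := key_count hS₀
      have hedge : G.edgeFinset.card + 1 = Fintype.card V := hT.card_edgeFinset
      have hcompl : S₀.card + S₀ᶜ.card = Fintype.card V := Finset.card_add_card_compl S₀
      -- pass to the reals
      have c1 : (gammaO G : ℝ) ≤ (S₀.card : ℝ) + ((W ∩ Y).card : ℝ) := by exact_mod_cast h1
      have c2 : 2 * ((W ∩ Y).card : ℝ) ≤ (W.card : ℝ) := by exact_mod_cast hY2
      have c3 : (W.card : ℝ) ≤ ((∑ v ∈ S₀ᶜ, (S₀ᶜ.filter (fun u => G.Adj v u)).card : ℕ) : ℝ) := by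
        exact_mod_cast hWD
      have c4 : 3 * ((S₀ᶜ.card : ℕ) : ℝ)
          + ((∑ v ∈ S₀ᶜ, (S₀ᶜ.filter (fun u => G.Adj v u)).card : ℕ) : ℝ)
          ≤ 2 * ((G.edgeFinset.card : ℕ) : ℝ) + (S₀.card : ℝ) := by exact_mod_cast hkey
      have c5 : ((G.edgeFinset.card : ℕ) : ℝ) + 1 = (Fintype.card V : ℝ) := by exact_mod_cast hedge
      have c6 : (S₀.card : ℝ) + ((S₀ᶜ.card : ℕ) : ℝ) = (Fintype.card V : ℝ) := by
        exact_mod_cast hcompl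
      have c7 : (S₀.card : ℝ) = (gammaA G : ℝ) := by exact_mod_cast hScard'
      push_neg at hcase
      linarith
  · -- the one-vertex case
    have hn_eq : Fintype.card V = 1 := by omega
    have huniv : GlobalOffensiveAlliance G (Finset.univ : Finset V) :=
      ⟨fun v hv => absurd (Finset.mem_univ v) hv,
       fun v hv _ => absurd (Finset.mem_univ v) hv⟩
    have hgo : gammaO G ≤ 1 := by
      have h := hgo_le _ huniv
      rwa [Finset.card_univ, hn_eq] at h
    have h6 : (0 : ℝ) ≤ (Fintype.card V : ℝ) / 6 := by positivity
    have e1 : (gammaO G : ℝ) ≤ 1 := by exact_mod_cast hgo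
    have e2 : (1 : ℝ) ≤ (gammaA G : ℝ) := by exact_mod_cast hgA1
    linarith
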